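/- arXiv:2501.05083 — 2 statements merged into one kernel-verified Lean document; each statement's English description precedes it below -/
import Mathlib

section
/- Let N ≥ 5 be an integer, let S > 0 and K ∈ ℝ be real numbers, and let b ≥ b* := (2/(N-2))·((N-4)/(N-2))^{(N-4)/2}·S^{-N/2}. Define h(t) := (1/2)t² + (b/4)t⁴ + K - ((N-2)/(2N))·S^{-N/(N-2)}·t^{2N/(N-2)} for t ≥ 0. Then h'(t) ≥ 0 for all t ≥ 0; in particular h is nondecreasing on [0, ∞). -/
/-- For `N ≥ 5` and `b ≥ b* = (2/(N-2))·((N-4)/(N-2))^{(N-4)/2}·S^{-N/2}`, the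
comparison function `h(t) = t²/2 + b t⁴/4 + K - ((N-2)/(2N)) S^{-N/(N-2)} t^{2N/(N-2)}`
satisfies `h'(t) ≥ 0` for all `t ≥ 0`; in particular `h` is nondecreasing on `[0, ∞)`. -/
theorem comparison_function_h_monotone (N : ℕ) (hN : 5 ≤ N) (S K b : ℝ) (hS : 0 < S)
    (hb : b ≥ (2 / ((N : ℝ) - 2)) * (((N : ℝ) - 4) / ((N : ℝ) - 2)) ^ (((N : ℝ) - 4) / 2)
            * S ^ (-(N : ℝ) / 2))
    (h : ℝ → ℝ)
    (hh : h = fun t => (1 / 2) * t ^ 2 + (b / 4) * t ^ 4 + K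
            - (((N : ℝ) - 2) / (2 * (N : ℝ))) * S ^ (-(N : ℝ) / ((N : ℝ) - 2))
              * t ^ ((2 * (N : ℝ)) / ((N : ℝ) - 2))) :
    (∀ t : ℝ, 0 ≤ t → 0 ≤ deriv h t) ∧ MonotoneOn h (Set.Ici 0) := by
  have hn : (5 : ℝ) ≤ (N : ℝ) := by exact_mod_cast hN
  set n : ℝ := (N : ℝ) with hn_def
  have hn2 : (0 : ℝ) < n - 2 := by linarith
  have hn4 : (0 : ℝ) < n - 4 := by linarith
  have hn0 : (0 : ℝ) < n := by linarith
  set p : ℝ := (2 * n) / (n - 2) with hp_def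
  have hp1 : (1 : ℝ) ≤ p := by
    rw [hp_def, le_div_iff₀ hn2]; linarith
  set q : ℝ := (n + 2) / (n - 2) with hq_def
  have hq0 : (0 : ℝ) < q := by positivity
  have hpq : p - 1 = q := by
    rw [hp_def, hq_def]; field_simp <;> ring
  set C : ℝ := S ^ (-n / (n - 2)) with hC_def
  have hC0 : 0 < C := Real.rpow_pos_of_pos hS _
  -- weights
  set θ : ℝ := (n - 4) / (n - 2) with hθ_def
  set w : ℝ := 2 / (n - 2) with hw_def
  have hθ0 : 0 < θ := by positivity
  have hw0 : 0 < w := by positivity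
  have h2n : n - 2 ≠ 0 := ne_of_gt hn2
  have hsum : θ + w = 1 := by
    rw [hθ_def, hw_def]; field_simp <;> ring
  -- positivity of b
  have hbstar : (0 : ℝ) <
      (2 / (n - 2)) * θ ^ ((n - 4) / 2) * S ^ (-n / 2) := by
    have := Real.rpow_pos_of_pos hθ0 ((n - 4) / 2)
    have := Real.rpow_pos_of_pos hS (-n / 2)
    positivity
  have hb0 : 0 < b := lt_of_lt_of_le hbstar hb
  -- the derivative of h
  have hderiv : ∀ t : ℝ, HasDerivAt h (t + b * t ^ 3 - C * t ^ q) t := by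
    intro t
    have h1 : HasDerivAt (fun x : ℝ => (1 / 2) * x ^ 2) ((1 / 2) * (2 * t)) t := by
      simpa using (hasDerivAt_pow 2 t).const_mul (1 / 2 : ℝ)
    have h2 : HasDerivAt (fun x : ℝ => (b / 4) * x ^ 4) ((b / 4) * (4 * t ^ 3)) t := by
      simpa using (hasDerivAt_pow 4 t).const_mul (b / 4 : ℝ)
    have h3 : HasDerivAt (fun x : ℝ => x ^ p) (p * t ^ (p - 1)) t :=
      Real.hasDerivAt_rpow_const (Or.inr hp1)
    have h4 : HasDerivAt (fun x : ℝ => ((n - 2) / (2 * n)) * C * x ^ p)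
        (((n - 2) / (2 * n)) * C * (p * t ^ (p - 1))) t :=
      h3.const_mul _
    have h5 := ((h1.add h2).add (hasDerivAt_const t K)).sub h4
    have heq : h = fun x : ℝ => ((1 / 2) * x ^ 2 + (b / 4) * x ^ 4 + K)
        - ((n - 2) / (2 * n)) * C * x ^ p := by
      rw [hh]
    rw [heq]
    convert h5 using 1
    · rfl
    · rfl
    · rfl
    have hcoef : ((n - 2) / (2 * n)) * p = 1 := by
      rw [hp_def]; field_simp
    rw [hpq]
    have : ((n - 2) / (2 * n)) * C * (p * t ^ q) = C * t ^ q := by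
      have : ((n - 2) / (2 * n)) * C * (p * t ^ q)
          = (((n - 2) / (2 * n)) * p) * (C * t ^ q) := by ring
      rw [this, hcoef, one_mul]
    rw [this]; ring
  -- the key inequality
  have key : ∀ t : ℝ, 0 ≤ t → C * t ^ q ≤ t + b * t ^ 3 := by
    intro t ht
    rcases eq_or_lt_of_le ht with h0 | h0
    · rw [← h0, Real.zero_rpow (ne_of_gt hq0)]
      norm_num
    · -- AM-GM
      have hp1' : 0 ≤ t / θ := by positivity
      have hp2' : 0 ≤ b * t ^ 3 / w := by positivity
      have amgm := Real.geom_mean_le_arith_mean2_weighted hθ0.le hw0.le hp1' hp2' hsum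
      have hrhs : θ * (t / θ) + w * (b * t ^ 3 / w) = t + b * t ^ 3 := by
        field_simp
      rw [hrhs] at amgm
      refine le_trans ?_ amgm
      -- monotonicity in b : replace b by b*
      set bs : ℝ := (2 / (n - 2)) * θ ^ ((n - 4) / 2) * S ^ (-n / 2) with hbs_def
      have hmono : (bs * t ^ 3 / w) ^ w ≤ (b * t ^ 3 / w) ^ w := by
        have ht3 : bs * t ^ 3 ≤ b * t ^ 3 :=
          mul_le_mul_of_nonneg_right hb (by positivity)
        exact Real.rpow_le_rpow (by positivity)
          ((div_le_div_iff_of_pos_right hw0).mpr ht3) hw0.le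
      have hEq : (t / θ) ^ θ * (bs * t ^ 3 / w) ^ w = C * t ^ q := by
        have hbsw : bs * t ^ 3 / w = θ ^ ((n - 4) / 2) * S ^ (-n / 2) * t ^ 3 := by
          rw [hbs_def, hw_def]
          field_simp <;> ring
        rw [hbsw]
        have hθa : (0:ℝ) ≤ θ ^ ((n - 4) / 2) := (Real.rpow_pos_of_pos hθ0 _).le
        have hSa : (0:ℝ) ≤ S ^ (-n / 2) := (Real.rpow_pos_of_pos hS _).le
        have e1 : (n - 4) / 2 * w = θ := by
          rw [hw_def, hθ_def]; field_simp <;> ring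
        have e2 : -n / 2 * w = -n / (n - 2) := by
          rw [hw_def]; field_simp <;> ring
        have h3w : (θ ^ ((n - 4) / 2) * S ^ (-n / 2) * t ^ 3) ^ w
            = θ ^ θ * C * t ^ ((3:ℝ) * w) := by
          rw [Real.mul_rpow (by positivity) (by positivity),
              Real.mul_rpow hθa hSa, ← Real.rpow_natCast t 3,
              ← Real.rpow_mul hθ0.le, ← Real.rpow_mul hS.le, ← Real.rpow_mul h0.le,
              e1, e2, ← hC_def]
          norm_num
        have hdiv : (t / θ) ^ θ = t ^ θ / θ ^ θ := Real.div_rpow h0.le hθ0.le θ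
        rw [h3w, hdiv]
        have hθθ : (0:ℝ) < θ ^ θ := Real.rpow_pos_of_pos hθ0 _
        have htq : t ^ θ * t ^ ((3:ℝ) * w) = t ^ q := by
          rw [← Real.rpow_add h0]
          congr 1
          rw [hq_def, hw_def, hθ_def]; field_simp <;> ring
        have hre : t ^ θ / θ ^ θ * (θ ^ θ * C * t ^ ((3:ℝ) * w))
            = (t ^ θ * t ^ ((3:ℝ) * w)) * C * (θ ^ θ / θ ^ θ) := by ring
        rw [hre, div_self (ne_of_gt hθθ), mul_one, htq, mul_comm]
      calc C * t ^ q = (t / θ) ^ θ * (bs * t ^ 3 / w) ^ w := hEq.symm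
        _ ≤ (t / θ) ^ θ * (b * t ^ 3 / w) ^ w :=
            mul_le_mul_of_nonneg_left hmono (Real.rpow_nonneg hp1' _)
  have part1 : ∀ t : ℝ, 0 ≤ t → 0 ≤ deriv h t := by
    intro t ht
    rw [(hderiv t).deriv]
    have := key t ht
    linarith
  refine ⟨part1, ?_⟩
  apply monotoneOn_of_deriv_nonneg (convex_Ici 0)
  · exact fun t _ => (hderiv t).continuousAt.continuousWithinAt
  · rw [interior_Ici]
    exact fun t _ => (hderiv t).differentiableAt.differentiableWithinAt
  · rw [interior_Ici]
    exact fun t ht => part1 t (le_of_lt ht)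
end

section
/- Let E be a real Banach space and let I : E → ℝ be continuously Fréchet differentiable. Let ρ > 0 and τ ∈ (0, ρ), write B̄_ρ := {u ∈ E : ‖u‖ ≤ ρ}, and let c := inf_{u ∈ B̄_ρ} I(u) be finite. Suppose there exists ε₀ > 0 such that every u ∈ B̄_ρ with I(u) ≤ c + ε₀ satisfies ‖u‖ ≤ ρ - τ. Then there exists a sequence {u_n} ⊂ B̄_ρ such that I(u_n) → c and ‖I'(u_n)‖_{E*} → 0 as n → ∞. -/
open Filter Topology

/-- A weak form of Ekeland's variational principle on a closed ball of a Banach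
space: from any starting point we obtain a point `v` with `I v ≤ I x₀` which is
an `ε`-slope almost-minimizer over the ball. -/
theorem ekeland_weak_on_ball
    {E : Type*} [NormedAddCommGroup E] [NormedSpace ℝ E] [CompleteSpace E]
    (I : E → ℝ) (hIc : Continuous I) (ρ : ℝ)
    (hbdd : BddBelow (I '' {u : E | ‖u‖ ≤ ρ}))
    (ε : ℝ) (hε : 0 < ε)
    (x₀ : E) (hx₀ : ‖x₀‖ ≤ ρ) :
    ∃ v : E, ‖v‖ ≤ ρ ∧ I v ≤ I x₀ ∧ ∀ w, ‖w‖ ≤ ρ → I v ≤ I w + ε * ‖w - v‖ := by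
  set B : Set E := {u : E | ‖u‖ ≤ ρ} with hB
  set T : E → Set E := fun x => {y | y ∈ B ∧ I y + ε * ‖y - x‖ ≤ I x} with hT
  have hself : ∀ x ∈ B, x ∈ T x := fun x hx => ⟨hx, by simp⟩
  have htrans : ∀ x y, y ∈ T x → T y ⊆ T x := by
    rintro x y ⟨hyB, hy⟩ z ⟨hzB, hz⟩
    refine ⟨hzB, ?_⟩
    have h3 : ‖z - x‖ ≤ ‖z - y‖ + ‖y - x‖ := norm_sub_le_norm_sub_add_norm_sub z y x
    nlinarith [hε.le]
  have hTsub : ∀ x, T x ⊆ B := fun x y hy => hy.1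
  have hbddT : ∀ x, BddBelow (I '' T x) := fun x =>
    hbdd.mono (Set.image_mono (hTsub x))
  have hclosed : ∀ x, IsClosed (T x) := by
    intro x
    have h1 : IsClosed B := isClosed_le continuous_norm continuous_const
    have h2 : IsClosed {y : E | I y + ε * ‖y - x‖ ≤ I x} :=
      isClosed_le (hIc.add (continuous_const.mul
        ((continuous_id.sub continuous_const).norm))) continuous_const
    exact h1.inter h2
  set m : E → ℝ := fun x => sInf (I '' T x) with hm
  have key : ∀ (n : ℕ) (x : E), ∃ y : E, x ∈ B → y ∈ T x ∧ I y < m x + (1/2)^n := by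
    intro n x
    by_cases hx : x ∈ B
    · have hne : (I '' T x).Nonempty := ⟨I x, x, hself x hx, rfl⟩
      obtain ⟨a, ⟨y, hyT, rfl⟩, ha⟩ := Real.lt_sInf_add_pos hne (by positivity : (0:ℝ) < (1/2)^n)
      exact ⟨y, fun _ => ⟨hyT, ha⟩⟩
    · exact ⟨x, fun h => absurd h hx⟩
  choose F hF using key
  set u : ℕ → E := fun n => Nat.rec x₀ (fun k x => F k x) n with hu
  have hu0 : u 0 = x₀ := rfl
  have huS : ∀ n, u (n+1) = F n (u n) := fun n => rfl
  have hinv : ∀ n, u n ∈ B := by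
    intro n
    induction n with
    | zero => exact hx₀
    | succ k ih =>
      rw [huS]
      exact ((hF k (u k) ih).1).1
  have hstep : ∀ n, u (n+1) ∈ T (u n) := by
    intro n; rw [huS]; exact (hF n (u n) (hinv n)).1
  have hIest : ∀ n, I (u (n+1)) < m (u n) + (1/2)^n := by
    intro n; rw [huS]; exact (hF n (u n) (hinv n)).2
  have hchain : ∀ k n, k ≤ n → u n ∈ T (u k) := by
    intro k n hkn
    induction n, hkn using Nat.le_induction with
    | base => exact hself _ (hinv k)
    | succ n hkn ih => exact htrans _ _ ih (hstep n)
  have hkey2 : ∀ n, ∀ y ∈ T (u (n+1)), ε * ‖y - u (n+1)‖ ≤ (1/2)^n := by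
    intro n y hy
    have h1 : I y + ε * ‖y - u (n+1)‖ ≤ I (u (n+1)) := hy.2
    have h2 : I (u (n+1)) < m (u n) + (1/2)^n := hIest n
    have h3 : m (u n) ≤ I y := csInf_le (hbddT (u n)) ⟨y, htrans _ _ (hstep n) hy, rfl⟩
    linarith
  have hdist : ∀ n, dist (u (n+1)) (u (n+2)) ≤ (1/ε) * (1/2)^n := by
    intro n
    have h := hkey2 n (u (n+2)) (hstep (n+1))
    rw [dist_eq_norm, norm_sub_rev, one_div, ← div_eq_inv_mul]
    exact (le_div_iff₀' hε).mpr h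
  have hcauchy : CauchySeq (fun n => u (n+1)) :=
    cauchySeq_of_le_geometric (1/2) (1/ε) (by norm_num) hdist
  obtain ⟨v, hv⟩ := cauchySeq_tendsto_of_complete hcauchy
  have hvT : ∀ k, v ∈ T (u k) := by
    intro k
    refine (hclosed (u k)).mem_of_tendsto hv ?_
    filter_upwards [eventually_ge_atTop k] with n hn
    exact hchain k (n+1) (le_trans hn (Nat.le_succ n))
  have hvB : ‖v‖ ≤ ρ := (hvT 0).1
  have hvx₀ : I v ≤ I x₀ := by
    have h := (hvT 0).2
    rw [hu0] at h
    nlinarith [norm_nonneg (v - x₀), hε.le]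
  refine ⟨v, hvB, hvx₀, ?_⟩
  intro w hw
  by_contra hcon
  push_neg at hcon
  have hwTv : w ∈ T v := ⟨hw, hcon.le⟩
  have hwT : ∀ n, w ∈ T (u (n+1)) := fun n => htrans _ _ (hvT (n+1)) hwTv
  have hbound : ∀ n, ‖w - u (n+1)‖ ≤ (1/ε) * (1/2)^n := by
    intro n
    have h := hkey2 n w (hwT n)
    rw [one_div, ← div_eq_inv_mul]
    exact (le_div_iff₀' hε).mpr h
  have hlim1 : Tendsto (fun n => ‖w - u (n+1)‖) atTop (𝓝 ‖w - v‖) :=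
    (tendsto_const_nhds.sub hv).norm
  have hlim2 : Tendsto (fun n : ℕ => (1/ε) * (1/2:ℝ)^n) atTop (𝓝 0) := by
    have h := tendsto_pow_atTop_nhds_zero_of_lt_one
      (by norm_num : (0:ℝ) ≤ 1/2) (by norm_num : (1:ℝ)/2 < 1)
    simpa using h.const_mul (1/ε)
  have hle : ‖w - v‖ ≤ 0 := le_of_tendsto_of_tendsto' hlim1 hlim2 hbound
  have hwv : w = v := by
    have h0 : ‖w - v‖ = 0 := le_antisymm hle (norm_nonneg _)
    rwa [norm_eq_zero, sub_eq_zero] at h0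
  rw [hwv, sub_self, norm_zero, mul_zero, add_zero] at hcon
  exact lt_irrefl _ hcon

/-- Existence of an `ε`-critical almost-minimizer, via the weak Ekeland principle. -/
theorem eps_critical_on_ball
    {E : Type*} [NormedAddCommGroup E] [NormedSpace ℝ E] [CompleteSpace E]
    (I : E → ℝ) (hI : ContDiff ℝ 1 I)
    (ρ τ : ℝ) (hρ : 0 < ρ) (hτ : 0 < τ) (hτρ : τ < ρ)
    (hbdd : BddBelow (I '' {u : E | ‖u‖ ≤ ρ}))
    (c : ℝ) (hc : c = sInf (I '' {u : E | ‖u‖ ≤ ρ}))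
    (ε₀ : ℝ) (hε₀ : 0 < ε₀)
    (hmin : ∀ u : E, ‖u‖ ≤ ρ → I u ≤ c + ε₀ → ‖u‖ ≤ ρ - τ)
    (ε : ℝ) (hεpos : 0 < ε) (hεle : ε ≤ ε₀) :
    ∃ v : E, ‖v‖ ≤ ρ ∧ c ≤ I v ∧ I v ≤ c + ε ∧ ‖fderiv ℝ I v‖ ≤ ε := by
  have hIc : Continuous I := hI.continuous
  have hd : Differentiable ℝ I := hI.differentiable one_ne_zero
  -- pick a starting almost-minimizer
  have hne : (I '' {u : E | ‖u‖ ≤ ρ}).Nonempty := ⟨I 0, 0, by simp [hρ.le], rfl⟩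
  obtain ⟨a, ⟨x₀, hx₀B, rfl⟩, ha⟩ := Real.lt_sInf_add_pos hne hεpos
  rw [← hc] at ha
  obtain ⟨v, hvB, hvx₀, hEk⟩ := ekeland_weak_on_ball I hIc ρ hbdd ε hεpos x₀ hx₀B
  have hIvle : I v ≤ c + ε := le_trans hvx₀ ha.le
  have hcle : c ≤ I v := by
    rw [hc]; exact csInf_le hbdd ⟨v, hvB, rfl⟩
  have hvρτ : ‖v‖ ≤ ρ - τ := hmin v hvB (le_trans hIvle (by linarith))
  have claim : ∀ h : E, -(ε * ‖h‖) ≤ fderiv ℝ I v h := by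
    intro h
    rcases eq_or_ne h 0 with rfl | hh
    · simp
    have hnh : 0 < ‖h‖ := norm_pos_iff.mpr hh
    have ht₀pos : 0 < τ / ‖h‖ := div_pos hτ hnh
    have hder : HasDerivAt (fun t : ℝ => I (v + t • h)) (fderiv ℝ I v h) 0 := by
      have h1 : HasDerivAt (fun t : ℝ => v + t • h) h 0 := by
        simpa using ((hasDerivAt_id (0:ℝ)).smul_const h).const_add v
      have h2 : HasFDerivAt I (fderiv ℝ I v) (v + (0:ℝ) • h) := by
        simpa using (hd v).hasFDerivAt
      exact h2.comp_hasDerivAt 0 h1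
    have hslope : Tendsto (slope (fun t : ℝ => I (v + t • h)) 0) (𝓝[>] 0)
        (𝓝 (fderiv ℝ I v h)) :=
      (hasDerivAt_iff_tendsto_slope.mp hder).mono_left
        (nhdsWithin_mono 0 (fun x hx => ne_of_gt hx))
    refine ge_of_tendsto hslope ?_
    filter_upwards [Ioo_mem_nhdsGT_of_mem (Set.mem_Ico.mpr ⟨le_refl 0, ht₀pos⟩)] with t ht
    obtain ⟨ht1, ht2⟩ := ht
    have hth : ‖t • h‖ = t * ‖h‖ := by
      rw [norm_smul, Real.norm_eq_abs, abs_of_pos ht1]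
    have hτt : t * ‖h‖ ≤ τ := by
      rw [← le_div_iff₀ hnh]
      exact ht2.le
    have hwball : ‖v + t • h‖ ≤ ρ := by
      calc ‖v + t • h‖ ≤ ‖v‖ + ‖t • h‖ := norm_add_le _ _
        _ ≤ (ρ - τ) + τ := add_le_add hvρτ (by rw [hth]; exact hτt)
        _ = ρ := by ring
    have hEkt := hEk (v + t • h) hwball
    have hnorm : ‖v + t • h - v‖ = t * ‖h‖ := by
      rw [add_sub_cancel_left, norm_smul, Real.norm_eq_abs, abs_of_pos ht1]
    rw [hnorm] at hEkt
    have hslope_eq : slope (fun s : ℝ => I (v + s • h)) 0 t = (I (v + t • h) - I v) / t := by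
      rw [slope_def_field]
      simp
    rw [hslope_eq, le_div_iff₀ ht1]
    nlinarith
  have hεnn : (0:ℝ) ≤ ε := hεpos.le
  have hDnorm : ‖fderiv ℝ I v‖ ≤ ε := by
    refine ContinuousLinearMap.opNorm_le_bound _ hεnn (fun h => ?_)
    rw [Real.norm_eq_abs, abs_le]
    constructor
    · have := claim h; linarith
    · have := claim (-h)
      rw [map_neg, norm_neg] at this
      linarith
  exact ⟨v, hvB, hcle, hIvle, hDnorm⟩

/-- Ekeland-type construction of a Palais–Smale minimizing sequence on a ball:
if `I` is `C¹` on a Banach space `E`, `c = inf_{‖u‖ ≤ ρ} I(u)` is finite, and all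
almost-minimizers over the closed ball of radius `ρ` stay in the ball of radius
`ρ - τ`, then there is a sequence `{u_n}` in the ball with `I(u_n) → c` and
`‖I'(u_n)‖_{E*} → 0`. -/
theorem ekeland_PS_sequence_on_ball
    {E : Type*} [NormedAddCommGroup E] [NormedSpace ℝ E] [CompleteSpace E]
    (I : E → ℝ) (hI : ContDiff ℝ 1 I)
    (ρ τ : ℝ) (hρ : 0 < ρ) (hτ : 0 < τ) (hτρ : τ < ρ)
    (hbdd : BddBelow (I '' {u : E | ‖u‖ ≤ ρ}))
    (c : ℝ) (hc : c = sInf (I '' {u : E | ‖u‖ ≤ ρ}))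
    (ε₀ : ℝ) (hε₀ : 0 < ε₀)
    (hmin : ∀ u : E, ‖u‖ ≤ ρ → I u ≤ c + ε₀ → ‖u‖ ≤ ρ - τ) :
    ∃ u : ℕ → E, (∀ n, ‖u n‖ ≤ ρ) ∧
      Tendsto (fun n => I (u n)) atTop (nhds c) ∧
      Tendsto (fun n => ‖fderiv ℝ I (u n)‖) atTop (nhds 0) := by
  have step : ∀ n : ℕ, ∃ v : E, ‖v‖ ≤ ρ ∧ c ≤ I v ∧ I v ≤ c + ε₀ / (n+1) ∧
      ‖fderiv ℝ I v‖ ≤ ε₀ / (n+1) := by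
    intro n
    have hpos : (0:ℝ) < ε₀ / (n+1) := by positivity
    have hle : ε₀ / (n+1) ≤ ε₀ := by
      apply div_le_self hε₀.le
      have : (0:ℝ) ≤ (n:ℝ) := Nat.cast_nonneg n
      linarith
    exact eps_critical_on_ball I hI ρ τ hρ hτ hτρ hbdd c hc ε₀ hε₀ hmin _ hpos hle
  choose u h1 h2 h3 h4 using step
  have ht : Tendsto (fun n : ℕ => ε₀ / (n+1)) atTop (𝓝 0) := by
    simpa [mul_one_div, div_eq_mul_inv] using tendsto_one_div_add_atTop_nhds_zero_nat.const_mul ε₀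
  refine ⟨u, h1, ?_, ?_⟩
  · have htc : Tendsto (fun n : ℕ => c + ε₀ / (n+1)) atTop (𝓝 c) := by
      simpa using tendsto_const_nhds.add ht
    exact tendsto_of_tendsto_of_tendsto_of_le_of_le tendsto_const_nhds htc h2 h3
  · exact tendsto_of_tendsto_of_tendsto_of_le_of_le tendsto_const_nhds ht
      (fun n => norm_nonneg _) h4
end
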